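/- Define f_{m,k}(q) by (1-q)/((zq;q)_k (q/z;q)_k) = ∑_{m∈ℤ} z^m f_{m,k}(q). Then for every m ≠ 0, f_{m,2}(q) = q^{|m|} ( (1 - q^{|m|+1})/((1-q^2)(1-q^3)) + q^{|m|+3}/((1-q^3)(1-q^4)) ). -/

import Mathlib

/-- `akm k m n` is the coefficient of `z^m q^n` in
`1/((qz;q)_k (q/z;q)_k) = ∏_{i=1}^{k} 1/((1 - z q^i)(1 - q^i/z))`, where
`(x;q)_k = ∏_{i=0}^{k-1} (1 - x q^i)`: it counts pairs `(α, β)` of `k`-tuples of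
nonnegative integers with `∑_{i=1}^k i(α_i + β_i) = n` and `∑ α_i - ∑ β_i = m`. -/
def akm (k : ℕ) (m : ℤ) (n : ℕ) : ℕ :=
  (Finset.univ.filter
    (fun p : (Fin k → Fin (n + 1)) × (Fin k → Fin (n + 1)) =>
      (∑ i : Fin k, (i.1 + 1) * (((p.1 i : ℕ)) + (p.2 i : ℕ)) = n) ∧
      ((∑ i : Fin k, ((p.1 i : ℕ) : ℤ)) - ∑ i : Fin k, ((p.2 i : ℕ) : ℤ)) = m)).card

/-- `fmk k m n` is the coefficient of `q^n` in `f_{m,k}(q)`, which is defined by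
`(1-q)/((zq;q)_k (q/z;q)_k) = ∑_{m ∈ ℤ} z^m f_{m,k}(q)`; thus
`fmk k m n = a_{k,m}(n) - a_{k,m}(n-1)`. -/
def fmk (k : ℕ) (m : ℤ) (n : ℕ) : ℤ :=
  (akm k m n : ℤ) - (if n = 0 then 0 else (akm k m (n - 1) : ℤ))

/-- The coefficient of `q^n` in `q^s/((1-q^a)(1-q^b)) = ∑_{i,j≥0} q^{s+ai+bj}`. -/
def geomCoeff (s a b n : ℕ) : ℤ :=
  if s ≤ n then
    (((Finset.range (n + 1) ×ˢ Finset.range (n + 1)).filter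
      (fun p => a * p.1 + b * p.2 = n - s)).card : ℤ)
  else 0

section Aux

open Finset

/-- Number of solutions of `a*x + b*y = j` in natural numbers. -/
def En (a b j : ℕ) : ℕ :=
  ((range (j+1) ×ˢ range (j+1)).filter (fun p => a * p.1 + b * p.2 = j)).card

/-- Number of solutions of `a*x + b*y ≤ j` in natural numbers. -/
def Cn (a b j : ℕ) : ℕ :=
  ((range (j+1) ×ˢ range (j+1)).filter (fun p => a * p.1 + b * p.2 ≤ j)).card

lemma En_range {a b j N : ℕ} (ha : 1 ≤ a) (hb : 1 ≤ b) (h : j ≤ N) :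
    ((range (N+1) ×ˢ range (N+1)).filter (fun p => a * p.1 + b * p.2 = j)).card = En a b j := by
  unfold En
  congr 1
  apply Finset.ext
  intro p
  simp only [mem_filter, mem_product, mem_range]
  constructor
  · rintro ⟨-, h3⟩
    have h1 : p.1 ≤ a * p.1 := Nat.le_mul_of_pos_left _ ha
    have h2 : p.2 ≤ b * p.2 := Nat.le_mul_of_pos_left _ hb
    have hp1 : p.1 ≤ j := h1.trans ((Nat.le_add_right _ _).trans h3.le)
    have hp2 : p.2 ≤ j := h2.trans ((Nat.le_add_left _ _).trans h3.le)
    exact ⟨⟨Nat.lt_succ_of_le hp1, Nat.lt_succ_of_le hp2⟩, h3⟩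
  · rintro ⟨⟨h1, h2⟩, h3⟩
    exact ⟨⟨by omega, by omega⟩, h3⟩

lemma Cn_range {a b j N : ℕ} (ha : 1 ≤ a) (hb : 1 ≤ b) (h : j ≤ N) :
    ((range (N+1) ×ˢ range (N+1)).filter (fun p => a * p.1 + b * p.2 ≤ j)).card = Cn a b j := by
  unfold Cn
  congr 1
  apply Finset.ext
  intro p
  simp only [mem_filter, mem_product, mem_range]
  constructor
  · rintro ⟨-, h3⟩
    have h1 : p.1 ≤ a * p.1 := Nat.le_mul_of_pos_left _ ha
    have h2 : p.2 ≤ b * p.2 := Nat.le_mul_of_pos_left _ hb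
    have hp1 : p.1 ≤ j := h1.trans ((Nat.le_add_right _ _).trans h3)
    have hp2 : p.2 ≤ j := h2.trans ((Nat.le_add_left _ _).trans h3)
    exact ⟨⟨Nat.lt_succ_of_le hp1, Nat.lt_succ_of_le hp2⟩, h3⟩
  · rintro ⟨⟨h1, h2⟩, h3⟩
    exact ⟨⟨by omega, by omega⟩, h3⟩

lemma Cn_zero (a b : ℕ) : Cn a b 0 = En a b 0 := by
  unfold Cn En
  exact congrArg Finset.card (Finset.ext fun p => by simp [Nat.le_zero])

lemma Cn_succ (a b j : ℕ) (ha : 1 ≤ a) (hb : 1 ≤ b) :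
    Cn a b (j+1) = Cn a b j + En a b (j+1) := by
  have hset : ((range (j+1+1) ×ˢ range (j+1+1)).filter (fun p => a * p.1 + b * p.2 ≤ j + 1))
      = ((range (j+1+1) ×ˢ range (j+1+1)).filter (fun p => a * p.1 + b * p.2 ≤ j)) ∪
        ((range (j+1+1) ×ˢ range (j+1+1)).filter (fun p => a * p.1 + b * p.2 = j + 1)) := by
    rw [← filter_or]
    exact filter_congr fun p _ => by exact_mod_cast Nat.le_add_one_iff
  have hdisj : Disjoint
      ((range (j+1+1) ×ˢ range (j+1+1)).filter (fun p => a * p.1 + b * p.2 ≤ j))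
      ((range (j+1+1) ×ˢ range (j+1+1)).filter (fun p => a * p.1 + b * p.2 = j + 1)) := by
    rw [Finset.disjoint_left]
    intro p h1 h2
    simp only [mem_filter] at h1 h2
    omega
  show ((range (j+1+1) ×ˢ range (j+1+1)).filter (fun p => a * p.1 + b * p.2 ≤ j+1)).card = _
  rw [hset, card_union_of_disjoint hdisj, Cn_range ha hb (Nat.le_succ j),
    En_range ha hb le_rfl]

lemma En23_step (j : ℕ) : En 2 3 (j+6) = En 2 3 j + 1 := by
  obtain ⟨k, r, hr, rfl⟩ : ∃ k r, r < 3 ∧ j = 3*k + r := ⟨j/3, j%3, by omega, by omega⟩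
  unfold En
  set R := range (3*k+r+6+1) ×ˢ range (3*k+r+6+1) with hR
  set S := R.filter (fun p : ℕ × ℕ => 2 * p.1 + 3 * p.2 = 3*k+r+6) with hS
  rw [← card_filter_add_card_filter_not (s := S) (p := fun p => p.1 ≤ 2)]
  have hbig : (S.filter (fun p => ¬ p.1 ≤ 2)).card
      = ((range (3*k+r+1) ×ˢ range (3*k+r+1)).filter
          (fun p : ℕ × ℕ => 2 * p.1 + 3 * p.2 = 3*k+r)).card := by
    apply Finset.card_nbij' (fun p => (p.1 - 3, p.2)) (fun q => (q.1 + 3, q.2))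
    · intro p hp
      obtain ⟨x, y⟩ := p
      simp only [hS, hR, mem_coe, mem_filter, mem_product, mem_range] at hp ⊢
      omega
    · intro q hq
      obtain ⟨x, y⟩ := q
      simp only [hS, hR, mem_coe, mem_filter, mem_product, mem_range] at hq ⊢
      omega
    · intro p hp
      obtain ⟨x, y⟩ := p
      simp only [hS, hR, mem_coe, mem_filter, mem_product, mem_range] at hp
      show (x - 3 + 3, y) = (x, y)
      have hx : x - 3 + 3 = x := by omega
      rw [hx]
    · intro q hq
      obtain ⟨x, y⟩ := q
      show (x + 3 - 3, y) = (x, y)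
      have hx : x + 3 - 3 = x := by omega
      rw [hx]
  have hsmall : (S.filter (fun p => p.1 ≤ 2)).card = 1 := by
    interval_cases r
    · rw [show (S.filter (fun p => p.1 ≤ 2)) = {((0 : ℕ), k+2)} from Finset.ext fun p => by
        simp only [hS, hR, mem_filter, mem_product, mem_range, mem_singleton, Prod.ext_iff]
        omega]
      rfl
    · rw [show (S.filter (fun p => p.1 ≤ 2)) = {((2 : ℕ), k+1)} from Finset.ext fun p => by
        simp only [hS, hR, mem_filter, mem_product, mem_range, mem_singleton, Prod.ext_iff]
        omega]
      rfl
    · rw [show (S.filter (fun p => p.1 ≤ 2)) = {((1 : ℕ), k+2)} from Finset.ext fun p => by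
        simp only [hS, hR, mem_filter, mem_product, mem_range, mem_singleton, Prod.ext_iff]
        omega]
      rfl
  rw [hbig, hsmall]
  omega

lemma En34_step (j : ℕ) : En 3 4 (j+12) = En 3 4 j + 1 := by
  obtain ⟨k, r, hr, rfl⟩ : ∃ k r, r < 4 ∧ j = 4*k + r := ⟨j/4, j%4, by omega, by omega⟩
  unfold En
  set R := range (4*k+r+12+1) ×ˢ range (4*k+r+12+1) with hR
  set S := R.filter (fun p : ℕ × ℕ => 3 * p.1 + 4 * p.2 = 4*k+r+12) with hS
  rw [← card_filter_add_card_filter_not (s := S) (p := fun p => p.1 ≤ 3)]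
  have hbig : (S.filter (fun p => ¬ p.1 ≤ 3)).card
      = ((range (4*k+r+1) ×ˢ range (4*k+r+1)).filter
          (fun p : ℕ × ℕ => 3 * p.1 + 4 * p.2 = 4*k+r)).card := by
    apply Finset.card_nbij' (fun p => (p.1 - 4, p.2)) (fun q => (q.1 + 4, q.2))
    · intro p hp
      obtain ⟨x, y⟩ := p
      simp only [hS, hR, mem_coe, mem_filter, mem_product, mem_range] at hp ⊢
      omega
    · intro q hq
      obtain ⟨x, y⟩ := q
      simp only [hS, hR, mem_coe, mem_filter, mem_product, mem_range] at hq ⊢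
      omega
    · intro p hp
      obtain ⟨x, y⟩ := p
      simp only [hS, hR, mem_coe, mem_filter, mem_product, mem_range] at hp
      show (x - 4 + 4, y) = (x, y)
      have hx : x - 4 + 4 = x := by omega
      rw [hx]
    · intro q hq
      obtain ⟨x, y⟩ := q
      show (x + 4 - 4, y) = (x, y)
      have hx : x + 4 - 4 = x := by omega
      rw [hx]
  have hsmall : (S.filter (fun p => p.1 ≤ 3)).card = 1 := by
    interval_cases r
    · rw [show (S.filter (fun p => p.1 ≤ 3)) = {((0 : ℕ), k+3)} from Finset.ext fun p => by
        simp only [hS, hR, mem_filter, mem_product, mem_range, mem_singleton, Prod.ext_iff]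
        omega]
      rfl
    · rw [show (S.filter (fun p => p.1 ≤ 3)) = {((3 : ℕ), k+1)} from Finset.ext fun p => by
        simp only [hS, hR, mem_filter, mem_product, mem_range, mem_singleton, Prod.ext_iff]
        omega]
      rfl
    · rw [show (S.filter (fun p => p.1 ≤ 3)) = {((2 : ℕ), k+2)} from Finset.ext fun p => by
        simp only [hS, hR, mem_filter, mem_product, mem_range, mem_singleton, Prod.ext_iff]
        omega]
      rfl
    · rw [show (S.filter (fun p => p.1 ≤ 3)) = {((1 : ℕ), k+3)} from Finset.ext fun p => by
        simp only [hS, hR, mem_filter, mem_product, mem_range, mem_singleton, Prod.ext_iff]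
        omega]
      rfl
  rw [hbig, hsmall]
  omega
lemma En_core (j : ℕ) : En 2 3 j = En 3 4 j + (if 2 ≤ j then En 3 4 (j-2) else 0) := by
  induction j using Nat.strong_induction_on with
  | _ j ih =>
    by_cases h : j < 14
    · interval_cases j <;> decide
    · obtain ⟨i, rfl⟩ : ∃ i, j = (i+2) + 12 := ⟨j - 14, by omega⟩
      have h1 : En 2 3 (i+2+12) = En 2 3 (i+2+6) + 1 := by
        have := En23_step (i+2+6); ring_nf at this ⊢; omega
      have h2 : En 2 3 (i+2+6) = En 2 3 (i+2) + 1 := by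
        have := En23_step (i+2); ring_nf at this ⊢; omega
      have h3 : En 3 4 (i+2+12) = En 3 4 (i+2) + 1 := En34_step (i+2)
      have h4 : En 3 4 (i+12) = En 3 4 i + 1 := En34_step i
      have h5 := ih (i+2) (by omega)
      rw [if_pos (by omega)] at h5 ⊢
      have e1 : i + 2 - 2 = i := by omega
      have e2 : i + 2 + 12 - 2 = i + 12 := by omega
      rw [e1] at h5
      rw [e2]
      omega
noncomputable def Epm (a b : ℕ) (x : ℤ) : ℤ := if 0 ≤ x then (En a b x.toNat : ℤ) else 0

noncomputable def Gpm (a b : ℕ) (x : ℤ) : ℤ := if 0 ≤ x then (Cn a b x.toNat : ℤ) else 0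

lemma geomCoeff_eq {a b : ℕ} (ha : 1 ≤ a) (hb : 1 ≤ b) (s n : ℕ) :
    geomCoeff s a b n = Epm a b ((n : ℤ) - s) := by
  unfold geomCoeff Epm
  by_cases h : s ≤ n
  · rw [if_pos h, if_pos (by omega)]
    rw [show ((n : ℤ) - s).toNat = n - s by omega]
    exact_mod_cast En_range ha hb (show n - s ≤ n by omega)
  · rw [if_neg h, if_neg (by omega)]

lemma Gpm_sub {a b : ℕ} (ha : 1 ≤ a) (hb : 1 ≤ b) (x : ℤ) :
    Gpm a b x - Gpm a b (x - 1) = Epm a b x := by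
  unfold Gpm Epm
  rcases lt_trichotomy x 0 with h | h | h
  · rw [if_neg (by omega), if_neg (by omega), if_neg (by omega)]
    ring
  · subst h
    rw [if_pos le_rfl, if_neg (by omega), if_pos le_rfl]
    norm_num [Cn_zero]
  · obtain ⟨j, rfl⟩ : ∃ j : ℕ, x = (j : ℤ) + 1 := ⟨(x - 1).toNat, by omega⟩
    rw [if_pos (by omega), if_pos (by omega), if_pos (by omega)]
    rw [show ((j : ℤ) + 1).toNat = j + 1 by omega, show ((j : ℤ) + 1 - 1).toNat = j by omega]
    rw [Cn_succ a b j ha hb]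
    push_cast
    ring

lemma Epm_core (x : ℤ) : Epm 2 3 x = Epm 3 4 x + Epm 3 4 (x - 2) := by
  unfold Epm
  by_cases h : 0 ≤ x
  · obtain ⟨j, rfl⟩ : ∃ j : ℕ, x = (j : ℤ) := ⟨x.toNat, by omega⟩
    have hc := En_core j
    rw [if_pos h, if_pos h, Int.toNat_natCast]
    by_cases h2 : 2 ≤ j
    · rw [if_pos (by omega : (0:ℤ) ≤ (j:ℤ) - 2), show ((j : ℤ) - 2).toNat = j - 2 by omega]
      rw [if_pos h2] at hc
      exact_mod_cast hc
    · rw [if_neg (by omega : ¬ (0:ℤ) ≤ (j:ℤ) - 2)]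
      rw [if_neg h2] at hc
      rw [add_zero]
      exact_mod_cast hc
  · rw [if_neg h, if_neg h, if_neg (by omega)]
    ring
lemma akm_neg (k : ℕ) (m : ℤ) (n : ℕ) : akm k (-m) n = akm k m n := by
  unfold akm
  apply Finset.card_nbij' (fun p => (p.2, p.1)) (fun p => (p.2, p.1))
  · intro p hp
    simp only [mem_coe, mem_filter, mem_univ, true_and] at hp ⊢
    refine ⟨?_, by omega⟩
    have hc : ∑ x : Fin k, ((x : ℕ) + 1) * ((p.2 x : ℕ) + (p.1 x : ℕ))
        = ∑ i : Fin k, ((i : ℕ) + 1) * ((p.1 i : ℕ) + (p.2 i : ℕ)) :=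
      Finset.sum_congr rfl fun i _ => by ring
    rw [hc]
    exact hp.1
  · intro p hp
    simp only [mem_coe, mem_filter, mem_univ, true_and] at hp ⊢
    refine ⟨?_, by omega⟩
    have hc : ∑ x : Fin k, ((x : ℕ) + 1) * ((p.2 x : ℕ) + (p.1 x : ℕ))
        = ∑ i : Fin k, ((i : ℕ) + 1) * ((p.1 i : ℕ) + (p.2 i : ℕ)) :=
      Finset.sum_congr rfl fun i _ => by ring
    rw [hc]
    exact hp.1
  · intro p _
    rfl
  · intro p _
    rfl

lemma akm_acount (M n : ℕ) :
    akm 2 (M : ℤ) n = ((range (n+1) ×ˢ range (n+1)).filter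
      (fun q : ℕ × ℕ => 2*q.1 + 3*q.2 + M ≤ n ∧ n ≤ 3*q.1 + 4*q.2 + 2*M)).card := by
  unfold akm
  refine Finset.card_bij' (fun p _ => ((p.2 0 : ℕ), (p.2 1 : ℕ)))
    (fun q hq =>
      (![⟨M + q.1 + q.2 - (n - (M + 2*q.1 + 3*q.2)), by
            simp only [mem_filter, mem_product, mem_range] at hq; omega⟩,
         ⟨n - (M + 2*q.1 + 3*q.2), by
            simp only [mem_filter, mem_product, mem_range] at hq; omega⟩],
       ![⟨q.1, by simp only [mem_filter, mem_product, mem_range] at hq; omega⟩,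
         ⟨q.2, by simp only [mem_filter, mem_product, mem_range] at hq; omega⟩]))
    ?hi ?hj ?left ?right
  case hi =>
    intro p hp
    simp only [mem_filter, mem_univ, true_and, Fin.sum_univ_two, Fin.val_zero, Fin.val_one] at hp
    simp only [mem_filter, mem_product, mem_range]
    exact ⟨⟨(p.2 0).isLt, (p.2 1).isLt⟩, by omega, by omega⟩
  case hj =>
    intro q hq
    have hq' := hq
    simp only [mem_filter, mem_product, mem_range] at hq'
    simp only [mem_filter, mem_univ, true_and, Fin.sum_univ_two, Fin.val_zero, Fin.val_one,
      Matrix.cons_val_zero, Matrix.cons_val_one, Matrix.head_cons]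
    constructor
    · omega
    · omega
  case left =>
    intro p hp
    have hp' := hp
    simp only [mem_filter, mem_univ, true_and, Fin.sum_univ_two, Fin.val_zero, Fin.val_one] at hp'
    refine Prod.ext ?_ ?_ <;> funext i <;> fin_cases i <;> apply Fin.ext <;>
      simp only [Matrix.cons_val_zero, Matrix.cons_val_one, Matrix.head_cons, Fin.mk_zero,
        Fin.mk_one] <;> omega
  case right =>
    intro q hq
    have hq' := hq
    simp only [mem_filter, mem_product, mem_range] at hq'
    obtain ⟨x, y⟩ := q
    simp only [Matrix.cons_val_zero, Matrix.cons_val_one, Matrix.head_cons]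
lemma acount_split (M n : ℕ) :
    (((range (n+1) ×ˢ range (n+1)).filter
        (fun q : ℕ × ℕ => 2*q.1 + 3*q.2 + M ≤ n ∧ n ≤ 3*q.1 + 4*q.2 + 2*M)).card)
      + (((range (n+1) ×ˢ range (n+1)).filter
        (fun q : ℕ × ℕ => 3*q.1 + 4*q.2 + (2*M+1) ≤ n)).card)
      = ((range (n+1) ×ˢ range (n+1)).filter
        (fun q : ℕ × ℕ => 2*q.1 + 3*q.2 + M ≤ n)).card := by
  have hdisj : Disjoint
      ((range (n+1) ×ˢ range (n+1)).filter
        (fun q : ℕ × ℕ => 2*q.1 + 3*q.2 + M ≤ n ∧ n ≤ 3*q.1 + 4*q.2 + 2*M))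
      ((range (n+1) ×ˢ range (n+1)).filter
        (fun q : ℕ × ℕ => 3*q.1 + 4*q.2 + (2*M+1) ≤ n)) := by
    rw [Finset.disjoint_left]
    intro p h1 h2
    simp only [mem_filter] at h1 h2
    omega
  rw [← card_union_of_disjoint hdisj, ← filter_or]
  congr 1
  apply filter_congr
  intro p _
  constructor
  · intro h
    omega
  · intro h
    omega

lemma akm_G (M n : ℕ) :
    (akm 2 (M : ℤ) n : ℤ) = Gpm 2 3 ((n : ℤ) - M) - Gpm 3 4 ((n : ℤ) - 2*M - 1) := by
  have h1 := akm_acount M n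
  have h2 := acount_split M n
  have h3 : (((range (n+1) ×ˢ range (n+1)).filter
      (fun q : ℕ × ℕ => 2*q.1 + 3*q.2 + M ≤ n)).card : ℤ) = Gpm 2 3 ((n : ℤ) - M) := by
    unfold Gpm
    by_cases h : M ≤ n
    · rw [if_pos (by omega), show ((n : ℤ) - M).toNat = n - M by omega]
      rw [show ((range (n+1) ×ˢ range (n+1)).filter
          (fun q : ℕ × ℕ => 2*q.1 + 3*q.2 + M ≤ n))
        = ((range (n+1) ×ˢ range (n+1)).filter
          (fun q : ℕ × ℕ => 2*q.1 + 3*q.2 ≤ n - M)) from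
        filter_congr fun p _ => by constructor <;> intro <;> omega]
      exact_mod_cast Cn_range (by norm_num) (by norm_num) (show n - M ≤ n by omega)
    · rw [if_neg (by omega)]
      norm_cast
      rw [Finset.card_eq_zero, Finset.filter_eq_empty_iff]
      intro p _
      omega
  have h4 : (((range (n+1) ×ˢ range (n+1)).filter
      (fun q : ℕ × ℕ => 3*q.1 + 4*q.2 + (2*M+1) ≤ n)).card : ℤ)
      = Gpm 3 4 ((n : ℤ) - 2*M - 1) := by
    unfold Gpm
    by_cases h : 2*M+1 ≤ n
    · rw [if_pos (by omega), show ((n : ℤ) - 2*M - 1).toNat = n - (2*M+1) by omega]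
      rw [show ((range (n+1) ×ˢ range (n+1)).filter
          (fun q : ℕ × ℕ => 3*q.1 + 4*q.2 + (2*M+1) ≤ n))
        = ((range (n+1) ×ˢ range (n+1)).filter
          (fun q : ℕ × ℕ => 3*q.1 + 4*q.2 ≤ n - (2*M+1))) from
        filter_congr fun p _ => by constructor <;> intro <;> omega]
      exact_mod_cast Cn_range (by norm_num) (by norm_num) (show n - (2*M+1) ≤ n by omega)
    · rw [if_neg (by omega)]
      norm_cast
      rw [Finset.card_eq_zero, Finset.filter_eq_empty_iff]
      intro p _
      omega
  rw [h1]
  omega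

end Aux

/-- For `m ≠ 0`,
`f_{m,2}(q) = q^{|m|} ((1-q^{|m|+1})/((1-q^2)(1-q^3)) + q^{|m|+3}/((1-q^3)(1-q^4)))`. -/
theorem fm2_eq (m : ℤ) (hm : m ≠ 0) (n : ℕ) :
    fmk 2 m n =
      geomCoeff m.natAbs 2 3 n - geomCoeff (2 * m.natAbs + 1) 2 3 n
        + geomCoeff (2 * m.natAbs + 3) 3 4 n := by
  set M := m.natAbs with hMdef
  have hsym : ∀ N : ℕ, akm 2 m N = akm 2 (M : ℤ) N := by
    intro N
    rcases le_or_gt 0 m with h | h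
    · rw [show ((M : ℕ) : ℤ) = m by omega]
    · rw [show ((M : ℕ) : ℤ) = -m by omega]
      exact (akm_neg 2 m N).symm
  have hA : (akm 2 m n : ℤ) = Gpm 2 3 ((n : ℤ) - M) - Gpm 3 4 ((n : ℤ) - 2*M - 1) := by
    rw [hsym n]; exact akm_G M n
  have hB : (if n = 0 then (0 : ℤ) else (akm 2 m (n-1) : ℤ))
      = Gpm 2 3 ((n : ℤ) - M - 1) - Gpm 3 4 ((n : ℤ) - 2*M - 1 - 1) := by
    rcases n with _ | n'
    · rw [if_pos rfl]
      unfold Gpm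
      rw [if_neg (by push_cast; omega), if_neg (by push_cast; omega)]
      ring
    · rw [if_neg (Nat.succ_ne_zero n')]
      have : n' + 1 - 1 = n' := rfl
      rw [this, hsym n', akm_G M n']
      congr 1 <;> [skip; congr 1] <;> push_cast <;> ring
  unfold fmk
  rw [hA, hB]
  rw [geomCoeff_eq (by norm_num) (by norm_num), geomCoeff_eq (by norm_num) (by norm_num),
    geomCoeff_eq (by norm_num) (by norm_num)]
  have e1 : ((n : ℤ) - (2 * M + 1 : ℕ)) = (n : ℤ) - 2*M - 1 := by push_cast; ring
  have e2 : ((n : ℤ) - (2 * M + 3 : ℕ)) = ((n : ℤ) - 2*M - 1) - 2 := by push_cast; ring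
  rw [e1, e2]
  have g1 := Gpm_sub (a := 2) (b := 3) (by norm_num) (by norm_num) ((n : ℤ) - M)
  have g2 := Gpm_sub (a := 3) (b := 4) (by norm_num) (by norm_num) ((n : ℤ) - 2*M - 1)
  have hcore := Epm_core ((n : ℤ) - 2*M - 1)
  linarith [g1, g2, hcore]
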